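/- Let R be a coherent domain and G an injective R-module. Let E = ∏_{P ∈ Max R} E_R(R/P) and F = Hom_R(Hom_R(G, E), E). Then F is an injective R-module and G is isomorphic to a direct summand of F. -/

import Mathlib

universe u

open CategoryTheory

/-- A commutative ring is *coherent* if every finitely generated ideal is finitely presented. -/
def IsCoherentRing (R : Type u) [CommRing R] : Prop :=
  ∀ I : Ideal R, I.FG → Module.FinitePresentation R I

/-- A commutative ring is *semicoherent* if for every pair of injective modules `E, F`,
the module `Hom_R(E, F)` is isomorphic to a submodule of a flat module. -/
def IsSemicoherentRing (R : Type u) [CommRing R] : Prop :=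
  ∀ E F : ModuleCat.{u} R, Module.Injective R E → Module.Injective R F →
    ∃ (M : ModuleCat.{u} R) (f : (E →ₗ[R] F) →ₗ[R] M),
      Module.Flat R M ∧ Function.Injective f

/-- A module `M` is *FP-injective* if `Ext¹_R(F, M) = 0` for every finitely presented
module `F`. -/
def IsFPInjective (R : Type u) [CommRing R] (M : Type u) [AddCommGroup M] [Module R M] : Prop :=
  ∀ F : ModuleCat.{u} R, Module.FinitePresentation R F →
    Subsingleton (((Ext R (ModuleCat.{u} R) 1).obj (Opposite.op F)).obj (ModuleCat.of R M))

/-- A commutative ring is an *IF-ring* if every injective module over it is flat. -/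
def IsIFRing (R : Type u) [CommRing R] : Prop :=
  ∀ M : ModuleCat.{u} R, Module.Injective R M → Module.Flat R M

/-- `f : M →ₗ[R] E` exhibits `E` as an injective hull (injective envelope) of `M`:
`E` is injective and `f` is an essential monomorphism. -/
def IsInjectiveHull (R : Type u) [CommRing R] (M : Type u) [AddCommGroup M] [Module R M]
    (E : Type u) [AddCommGroup E] [Module R E] (f : M →ₗ[R] E) : Prop :=
  Module.Injective R E ∧ Function.Injective f ∧
    ∀ N : Submodule R E, N ≠ ⊥ → N ⊓ LinearMap.range f ≠ ⊥

/-- A submodule is indecomposable if it is nonzero and is not the direct sum of two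
nonzero submodules. -/
def IsIndecomposableSubmodule {R : Type u} [CommRing R] {M : Type u} [AddCommGroup M]
    [Module R M] (N : Submodule R M) : Prop :=
  N ≠ ⊥ ∧ ∀ A B : Submodule R M, A ≤ N → B ≤ N → A ⊓ B = ⊥ → A ⊔ B = N → A = ⊥ ∨ B = ⊥

/-- A module has *finite Goldie dimension* if its injective hull is a finite direct sum
of indecomposable injective modules. -/
def HasFiniteGoldieDimension (R : Type u) [CommRing R] (M : Type u) [AddCommGroup M]
    [Module R M] : Prop :=
  ∃ (E : ModuleCat.{u} R) (f : M →ₗ[R] E) (n : ℕ) (N : Fin n → Submodule R E),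
    IsInjectiveHull R M E f ∧ iSupIndep N ∧ (⨆ i, N i) = ⊤ ∧
      ∀ i, IsIndecomposableSubmodule (N i) ∧ Module.Injective R (N i)

/-- A commutative ring is *arithmetical* if all its localizations at maximal ideals are
valuation rings, i.e. have totally ordered lattices of ideals. -/
def IsArithmeticalRing (R : Type u) [CommRing R] : Prop :=
  ∀ (P : Ideal R) [P.IsMaximal],
    ∀ I J : Ideal (Localization.AtPrime P), I ≤ J ∨ J ≤ I

/-- A module `M` is *finitely injective* if every homomorphism from a finitely generated
submodule `A` of an arbitrary module `B` into `M` extends to `B`. -/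
def IsFinitelyInjective (R : Type u) [CommRing R] (M : Type u) [AddCommGroup M]
    [Module R M] : Prop :=
  ∀ (B : ModuleCat.{u} R) (A : Submodule R B), A.FG →
    ∀ f : A →ₗ[R] M, ∃ g : (B : Type u) →ₗ[R] M, ∀ a : A, g a = f a


section AuxDoubleDual

open TensorProduct LinearMap

variable {R : Type u} [CommRing R]
variable {G : Type u} [AddCommGroup G] [Module R G]
variable {Q : Type u} [AddCommGroup Q] [Module R Q]

noncomputable def theta (P : Type u) [AddCommGroup P] [Module R P] :
    P ⊗[R] (G →ₗ[R] Q) →ₗ[R] ((P →ₗ[R] G) →ₗ[R] Q) :=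
  TensorProduct.lift ((LinearMap.llcomp R (P →ₗ[R] G) G Q).flip.comp LinearMap.applyₗ)

@[simp] lemma theta_tmul (P : Type u) [AddCommGroup P] [Module R P]
    (p : P) (f : G →ₗ[R] Q) (φ : P →ₗ[R] G) :
    theta P (p ⊗ₜ f) φ = f (φ p) := rfl

lemma theta_natural {P P' : Type u} [AddCommGroup P] [Module R P]
    [AddCommGroup P'] [Module R P'] (u : P →ₗ[R] P')
    (x : P ⊗[R] (G →ₗ[R] Q)) (φ : P' →ₗ[R] G) :
    theta (G := G) (Q := Q) P' (u.rTensor _ x) φ = theta P x (φ.comp u) := by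
  induction x with
  | zero => simp
  | tmul p f => simp
  | add a b ha hb => simp [ha, hb]

section Free

variable (ι : Type u) [Fintype ι] [DecidableEq ι]

/-- `ε i g` is the map `v ↦ v i • g`. -/
noncomputable def eps (i : ι) : G →ₗ[R] ((ι → R) →ₗ[R] G) where
  toFun g := (LinearMap.proj i : (ι → R) →ₗ[R] R).smulRight g
  map_add' g h := LinearMap.ext fun v => by
    simp only [smulRight_apply, proj_apply, LinearMap.add_apply, smul_add]
  map_smul' r g := LinearMap.ext fun v => by
    simp only [smulRight_apply, proj_apply, RingHom.id_apply, LinearMap.smul_apply]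
    rw [smul_comm]

@[simp] lemma eps_apply (i : ι) (g : G) (v : ι → R) : eps (R := R) ι i g v = v i • g := rfl

noncomputable def psi : (((ι → R) →ₗ[R] G) →ₗ[R] Q) →ₗ[R] (ι → R) ⊗[R] (G →ₗ[R] Q) :=
  ∑ i : ι, (TensorProduct.mk R (ι → R) (G →ₗ[R] Q) (Pi.single i 1)).comp
    ((LinearMap.llcomp R G ((ι → R) →ₗ[R] G) Q).flip (eps ι i))

lemma psi_apply (Φ : ((ι → R) →ₗ[R] G) →ₗ[R] Q) :
    psi (R := R) ι Φ = ∑ i : ι, (Pi.single i 1 : ι → R) ⊗ₜ (Φ.comp (eps ι i)) := by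
  simp [psi]
  rfl

lemma theta_bijective_pi : Function.Bijective (theta (R := R) (G := G) (Q := Q) (ι → R)) := by
  constructor
  · have h : ∀ x : (ι → R) ⊗[R] (G →ₗ[R] Q), psi ι (theta (ι → R) x) = x := by
      intro x
      induction x with
      | zero => simp
      | tmul p f =>
        rw [psi_apply]
        have h1 : ∀ i : ι, (theta (ι → R) (p ⊗ₜ f)).comp (eps ι i) = p i • f := by
          intro i; ext g; simp
        simp_rw [h1]
        have h2 : ∀ i : ι, (Pi.single i (1:R) : ι → R) ⊗ₜ[R] (p i • f)
            = (Pi.single i (p i) : ι → R) ⊗ₜ[R] f := fun i => by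
          rw [tmul_smul, smul_tmul', ← Pi.single_smul, smul_eq_mul, mul_one]
        simp_rw [h2, ← TensorProduct.sum_tmul, Finset.univ_sum_single]
      | add a b ha hb => simp only [map_add, ha, hb]
    intro a b hab
    rw [← h a, ← h b, hab]
  · intro Φ
    refine ⟨psi ι Φ, ?_⟩
    ext φ
    rw [psi_apply, map_sum, LinearMap.sum_apply]
    have h1 : ∀ i : ι, theta (ι → R) ((Pi.single i 1 : ι → R) ⊗ₜ (Φ.comp (eps ι i))) φ
        = Φ (eps ι i (φ (Pi.single i 1))) := by intro i; simp
    simp_rw [h1, ← map_sum]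
    congr 1
    refine LinearMap.ext fun v => ?_
    rw [LinearMap.sum_apply]
    simp only [eps_apply]
    have h3 : ∀ i : ι, v i • φ (Pi.single i 1) = φ (Pi.single i (v i)) := fun i => by
      rw [← map_smul, ← Pi.single_smul, smul_eq_mul, mul_one]
    simp_rw [h3, ← map_sum, Finset.univ_sum_single]

end Free

lemma theta_bijective_of_equiv {P P' : Type u} [AddCommGroup P] [Module R P]
    [AddCommGroup P'] [Module R P'] (u : P ≃ₗ[R] P')
    (h : Function.Bijective (theta (R := R) (G := G) (Q := Q) P)) :
    Function.Bijective (theta (R := R) (G := G) (Q := Q) P') := by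
  have hsurj : Function.Surjective ((u.toLinearMap).rTensor (G →ₗ[R] Q)) :=
    LinearMap.rTensor_surjective _ u.surjective
  constructor
  · rw [injective_iff_map_eq_zero]
    intro y hy
    obtain ⟨x, rfl⟩ := hsurj y
    have hx : theta (R := R) (G := G) (Q := Q) P x = 0 := by
      refine LinearMap.ext fun ψ => ?_
      have := theta_natural (G := G) (Q := Q) u.toLinearMap x ((ψ.comp u.symm.toLinearMap))
      rw [hy] at this
      simp only [LinearMap.zero_apply] at this
      have h2 : (ψ.comp u.symm.toLinearMap).comp u.toLinearMap = ψ := by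
        refine LinearMap.ext fun p => ?_; simp
      rw [h2] at this
      rw [← this]; rfl
    rw [(injective_iff_map_eq_zero _).mp h.injective x hx, map_zero]
  · intro Φ
    obtain ⟨x, hx⟩ := h.surjective (Φ.comp (LinearMap.lcomp R G u.symm.toLinearMap))
    refine ⟨u.toLinearMap.rTensor _ x, LinearMap.ext fun φ => ?_⟩
    rw [theta_natural, hx]
    simp only [LinearMap.comp_apply, LinearMap.lcomp_apply']
    congr 1
    refine LinearMap.ext fun p' => ?_
    simp

lemma theta_bijective_finsupp (s : Type u) [Fintype s] :
    Function.Bijective (theta (R := R) (G := G) (Q := Q) (s →₀ R)) := by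
  classical
  exact theta_bijective_of_equiv (Finsupp.linearEquivFunOnFinite R R s).symm
    (theta_bijective_pi s)

lemma theta_injective_of_fp (hQ : Module.Injective R Q)
    (P : Type u) [AddCommGroup P] [Module R P]
    (hP : Module.FinitePresentation R P) :
    Function.Injective (theta (R := R) (G := G) (Q := Q) P) := by
  classical
  obtain ⟨s, hs, hker⟩ := hP.out
  set π : (↥s →₀ R) →ₗ[R] P := Finsupp.linearCombination R ((↑) : s → P) with hπdef
  have hπ : Function.Surjective π := by
    rw [← LinearMap.range_eq_top, hπdef, Finsupp.range_linearCombination,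
      Subtype.range_coe_subtype, Finset.setOf_mem, hs]
  obtain ⟨t, ht⟩ := hker
  set d : (↥t →₀ R) →ₗ[R] (↥s →₀ R) := Finsupp.linearCombination R ((↑) : t → (↥s →₀ R)) with hddef
  have hd : LinearMap.range d = LinearMap.ker π := by
    rw [hddef, Finsupp.range_linearCombination, Subtype.range_coe_subtype, Finset.setOf_mem, ht]
  rw [injective_iff_map_eq_zero]
  intro x hx
  obtain ⟨y, rfl⟩ := LinearMap.rTensor_surjective (G →ₗ[R] Q) hπ x
  set b := theta (R := R) (G := G) (Q := Q) (↥s →₀ R) y with hb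
  have hbker : ∀ φ : P →ₗ[R] G, b (φ.comp π) = 0 := by
    intro φ
    rw [hb, ← theta_natural, hx]
    rfl
  -- b kills the kernel of precomposition with d
  have hkill : ∀ χ ∈ LinearMap.ker (LinearMap.lcomp R G d), b χ = 0 := by
    intro χ hχ
    rw [LinearMap.mem_ker] at hχ
    -- χ ∘ d = 0, so χ kills range d = ker π, hence factors through π
    have hχker : LinearMap.ker π ≤ LinearMap.ker χ := by
      rw [← hd]
      rintro z ⟨w, rfl⟩
      have := congrArg (fun (f : (↥t →₀ R) →ₗ[R] G) => f w) hχ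
      simpa using this
    set e := LinearMap.quotKerEquivOfSurjective π hπ with he
    set φ : P →ₗ[R] G := (Submodule.liftQ (LinearMap.ker π) χ hχker).comp e.symm.toLinearMap
      with hφ
    have hfactor : χ = φ.comp π := by
      refine LinearMap.ext fun z => ?_
      have hez : e.symm (π z) = Submodule.Quotient.mk z := by
        apply e.injective
        rw [LinearEquiv.apply_symm_apply]
        rfl
      simp only [hφ, LinearMap.comp_apply, LinearEquiv.coe_coe, hez, Submodule.liftQ_apply]
    rw [hfactor]
    exact hbker φ
  -- factor b through the range of precomposition with d, and extend by injectivity of Q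
  have hkill' : LinearMap.ker (LinearMap.lcomp R G d) ≤ LinearMap.ker b :=
    fun χ hχ => LinearMap.mem_ker.mpr (hkill χ hχ)
  set bbar := Submodule.liftQ _ b hkill'
  set c₀ : ↥(LinearMap.range (LinearMap.lcomp R G d)) →ₗ[R] Q :=
    bbar.comp (LinearMap.quotKerEquivRange (LinearMap.lcomp R G d)).symm.toLinearMap
  obtain ⟨c, hc⟩ := hQ.out (LinearMap.range (LinearMap.lcomp R G d)).subtype
    (Submodule.injective_subtype _) c₀
  have hcb : ∀ χ : (↥s →₀ R) →ₗ[R] G, c (χ.comp d) = b χ := by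
    intro χ
    have hmem : χ.comp d ∈ LinearMap.range (LinearMap.lcomp R G d) := ⟨χ, rfl⟩
    have h1 : c (χ.comp d) = c₀ ⟨χ.comp d, hmem⟩ := hc ⟨χ.comp d, hmem⟩
    rw [h1]
    show bbar ((LinearMap.quotKerEquivRange (LinearMap.lcomp R G d)).symm ⟨χ.comp d, hmem⟩) = b χ
    have h2 : (LinearMap.quotKerEquivRange (LinearMap.lcomp R G d)).symm ⟨χ.comp d, hmem⟩
        = Submodule.Quotient.mk χ := by
      apply (LinearMap.quotKerEquivRange (LinearMap.lcomp R G d)).injective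
      rw [LinearEquiv.apply_symm_apply]
      exact Subtype.ext (by rw [LinearMap.quotKerEquivRange_apply_mk]; rfl)
    rw [h2]
    rfl
  -- use surjectivity of theta on the frees
  obtain ⟨z, hz⟩ := (theta_bijective_finsupp (G := G) (Q := Q) ↥t).2 c
  have hyz : d.rTensor (G →ₗ[R] Q) z = y := by
    apply (theta_bijective_finsupp (G := G) (Q := Q) ↥s).1
    refine LinearMap.ext fun χ => ?_
    rw [theta_natural, hz]
    exact hcb χ
  have hπd : π.comp d = 0 := by
    refine LinearMap.ext fun w => ?_
    have : d w ∈ LinearMap.ker π := hd ▸ LinearMap.mem_range_self d w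
    simpa using this
  rw [← hyz, ← LinearMap.rTensor_comp_apply, hπd, LinearMap.rTensor_zero, LinearMap.zero_apply]

/-- Over a coherent ring, `Hom(G, Q)` is flat whenever `G` and `Q` are injective. -/
lemma flat_hom_of_injective (hcoh : ∀ I : Ideal R, I.FG → Module.FinitePresentation R I)
    (hG : Module.Injective R G) (hQ : Module.Injective R Q) :
    Module.Flat R (G →ₗ[R] Q) := by
  rw [Module.Flat.iff_rTensor_injective]
  intro I hI
  rw [injective_iff_map_eq_zero]
  intro x hx
  have h0 : theta (R := R) (G := G) (Q := Q) ↥I x = 0 := by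
    refine LinearMap.ext fun ψ => ?_
    obtain ⟨φ, hφ⟩ := hG.out I.subtype (Submodule.injective_subtype I) ψ
    have hψ : ψ = φ.comp I.subtype := LinearMap.ext fun a => (hφ a).symm
    rw [hψ, LinearMap.zero_apply, ← theta_natural, hx, map_zero, LinearMap.zero_apply]
  exact theta_injective_of_fp (G := G) hQ ↥I (hcoh I hI) (by rw [h0, map_zero])

/-- A product of injective modules is injective. -/
lemma injective_pi {ι : Type u} (E : ι → Type u) [∀ i, AddCommGroup (E i)]
    [∀ i, Module R (E i)] (h : ∀ i, Module.Injective R (E i)) :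
    Module.Injective R (∀ i, E i) := by
  constructor
  intro X Y _ _ _ _ f hf g
  have H : ∀ i, ∃ hi : Y →ₗ[R] E i, ∀ x, hi (f x) = (LinearMap.proj i).comp g x :=
    fun i => (h i).out f hf ((LinearMap.proj i).comp g)
  choose hs hhs using H
  exact ⟨LinearMap.pi hs, fun x => funext fun i => hhs i x⟩

/-- If `M` is flat and `Q` is injective, then `Hom(M, Q)` is injective. -/
lemma injective_hom_of_flat (M : Type u) [AddCommGroup M] [Module R M]
    (hM : Module.Flat R M) (hQ : Module.Injective R Q) :
    Module.Injective R (M →ₗ[R] Q) := by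
  constructor
  intro X Y _ _ _ _ f hf g
  set g' : X ⊗[R] M →ₗ[R] Q := TensorProduct.uncurry (RingHom.id R) X M Q g
  have hft : Function.Injective (f.rTensor M) :=
    Module.Flat.rTensor_preserves_injective_linearMap f hf
  obtain ⟨k, hk⟩ := hQ.out (f.rTensor M) hft g'
  refine ⟨TensorProduct.curry k, fun x => ?_⟩
  refine LinearMap.ext fun m => ?_
  have := hk (x ⊗ₜ m)
  simpa [g'] using this


end AuxDoubleDual

/-- Let `R` be a coherent domain and `G` an injective `R`-module. Let
`E = ∏_{P ∈ Max R} E_R(R/P)` and `F = Hom_R(Hom_R(G, E), E)`. Then `F` is an injective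
`R`-module and `G` is a direct summand of `F`. -/
theorem coherent_domain_double_dual_injective (R : Type u) [CommRing R] [IsDomain R]
    (hcoh : IsCoherentRing R)
    (G : ModuleCat.{u} R) (hG : Module.Injective R G)
    (E : MaximalSpectrum R → ModuleCat.{u} R)
    (e : ∀ P : MaximalSpectrum R, (R ⧸ P.asIdeal) →ₗ[R] E P)
    (hE : ∀ P : MaximalSpectrum R, IsInjectiveHull R (R ⧸ P.asIdeal) (E P) (e P)) :
    Module.Injective R
      (((G : Type u) →ₗ[R] (∀ P, (E P : Type u))) →ₗ[R] (∀ P, (E P : Type u))) ∧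
    ∃ (i : (G : Type u) →ₗ[R]
          (((G : Type u) →ₗ[R] (∀ P, (E P : Type u))) →ₗ[R] (∀ P, (E P : Type u))))
      (s : (((G : Type u) →ₗ[R] (∀ P, (E P : Type u))) →ₗ[R] (∀ P, (E P : Type u))) →ₗ[R]
          (G : Type u)),
      s.comp i = LinearMap.id := by
  classical
  set Eb : Type u := ∀ P, (E P : Type u) with hEb
  have hEbInj : Module.Injective R Eb := injective_pi _ (fun P => (hE P).1)
  have hHflat : Module.Flat R ((G : Type u) →ₗ[R] Eb) :=
    flat_hom_of_injective hcoh hG hEbInj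
  have hFInj : Module.Injective R (((G : Type u) →ₗ[R] Eb) →ₗ[R] Eb) :=
    injective_hom_of_flat _ hHflat hEbInj
  refine ⟨hFInj, ?_⟩
  -- the evaluation map
  set i : (G : Type u) →ₗ[R] (((G : Type u) →ₗ[R] Eb) →ₗ[R] Eb) :=
    LinearMap.applyₗ with hi
  have hiInj : Function.Injective i := by
    rw [injective_iff_map_eq_zero]
    intro g hg
    by_contra hg0
    -- find a maximal ideal containing the annihilator of g
    set q : R →ₗ[R] (G : Type u) := LinearMap.toSpanSingleton R _ g with hq
    have hker : LinearMap.ker q ≠ ⊤ := by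
      intro h
      have : q 1 = 0 := by
        rw [← LinearMap.mem_ker, h]; trivial
      simp only [hq, LinearMap.toSpanSingleton_apply_one] at this
      exact hg0 this
    obtain ⟨P, hPmax, hPle⟩ := Ideal.exists_le_maximal _ hker
    set Pm : MaximalSpectrum R := ⟨P, hPmax⟩
    -- map from the cyclic submodule R•g to R/P
    set φ : ↥(LinearMap.range q) →ₗ[R] (R ⧸ P) :=
      (Submodule.mapQ (LinearMap.ker q) P LinearMap.id hPle).comp
        (LinearMap.quotKerEquivRange q).symm.toLinearMap with hφ
    obtain ⟨f, hf⟩ := (hE Pm).1.out (LinearMap.range q).subtype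
      (Submodule.injective_subtype _) ((e Pm).comp φ)
    -- f : G →ₗ E Pm with f g = e Pm (1 mod P) ≠ 0
    have hgmem : g ∈ LinearMap.range q := ⟨1, by simp [hq]⟩
    have hfg : f g ≠ 0 := by
      have h1 : f g = (e Pm) (φ ⟨g, hgmem⟩) := hf ⟨g, hgmem⟩
      have h2 : φ ⟨g, hgmem⟩ = Submodule.Quotient.mk 1 := by
        have h3 : (⟨g, hgmem⟩ : ↥(LinearMap.range q)) = ⟨q 1, LinearMap.mem_range_self q 1⟩ := by
          apply Subtype.ext; simp [hq]
        rw [hφ, LinearMap.comp_apply, h3]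
        have h4 : (LinearMap.quotKerEquivRange q).symm ⟨q 1, LinearMap.mem_range_self q 1⟩
            = (LinearMap.ker q).mkQ 1 :=
          q.quotKerEquivRange_symm_apply_image 1 (LinearMap.mem_range_self q 1)
        rw [LinearEquiv.coe_coe, h4]
        show (Submodule.mapQ (LinearMap.ker q) P LinearMap.id hPle) (Submodule.Quotient.mk 1) = _
        rw [Submodule.mapQ_apply]
        rfl
      have h5 : (Submodule.Quotient.mk (1:R) : R ⧸ P) ≠ 0 := by
        rw [Ne, Submodule.Quotient.mk_eq_zero]
        exact fun h => hPmax.ne_top (Ideal.eq_top_of_isUnit_mem P h isUnit_one)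
      rw [h1, h2]
      intro h6
      exact h5 ((hE Pm).2.1 (by rw [h6, map_zero]))
    -- contradiction with i g = 0
    set fE : (G : Type u) →ₗ[R] Eb := (LinearMap.single R (fun P => (E P : Type u)) Pm).comp f
    have : i g fE = 0 := by rw [hg]; rfl
    have hval : i g fE = fE g := rfl
    apply hfg
    have h7 : fE g = 0 := by rw [← hval, this]
    have h8 := congrArg (fun v => v Pm) h7
    have h9 : f g = (0 : Eb) Pm := by simpa [fE] using h8
    exact h9
  obtain ⟨s, hs⟩ := hG.out i hiInj LinearMap.id
  exact ⟨i, s, LinearMap.ext fun g => hs g⟩
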